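/- arXiv:1203.6303 — 2 statements merged into one kernel-verified Lean document; each statement's English description precedes it below -/
import Mathlib

section
/- For every k > 1 there exists c > 0 such that for all μ, ν with H̄* < ν < μ ≤ k and μ − ν ≥ 1/k, and all x, y ∈ ℝ^d: m_μ(y,x) ≥ m_ν(y,x) + c|x−y|. -/
open MeasureTheory Filter Topology Bornology
open scoped RealInnerProductSpace NNReal

noncomputable section

/-- Euclidean space ℝ^d. -/
abbrev Ed (d : ℕ) := EuclideanSpace ℝ (Fin d)

/-- The set 𝓛 of globally Lipschitz real-valued functions on ℝ^d. -/
def LipFuns (d : ℕ) : Set (Ed d → ℝ) := {w | ∃ C : ℝ≥0, LipschitzWith C w}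

/-- SL⁺ : Lipschitz functions sublinear from below, i.e. liminf_{|y|→∞} w(y)/|y| ≥ 0. -/
def SLplus (d : ℕ) : Set (Ed d → ℝ) :=
  {w | w ∈ LipFuns d ∧ ∀ ε : ℝ, 0 < ε → ∃ R : ℝ, ∀ y : Ed d, R ≤ ‖y‖ → -ε ≤ w y / ‖y‖}

/-- SL⁻ : Lipschitz functions sublinear from above, i.e. limsup_{|y|→∞} w(y)/|y| ≤ 0. -/
def SLminus (d : ℕ) : Set (Ed d → ℝ) :=
  {w | w ∈ LipFuns d ∧ ∀ ε : ℝ, 0 < ε → ∃ R : ℝ, ∀ y : Ed d, R ≤ ‖y‖ → w y / ‖y‖ ≤ ε}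

/-- 𝓢 : Lipschitz functions strictly sublinear at infinity. -/
def Scal (d : ℕ) : Set (Ed d → ℝ) := SLplus d ∩ SLminus d

/-- H̄₊(p) = inf_{w ∈ SL⁺} esssup_y H(p + Dw(y), y). -/
def HbarPlus (d : ℕ) (H : Ed d → Ed d → ℝ) (p : Ed d) : ℝ :=
  sInf {t | ∃ w ∈ SLplus d, t = essSup (fun y => H (p + gradient w y) y) volume}

/-- H̄₋(p) = inf_{w ∈ SL⁻} esssup_y H(p + Dw(y), y). -/
def HbarMinus (d : ℕ) (H : Ed d → Ed d → ℝ) (p : Ed d) : ℝ :=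
  sInf {t | ∃ w ∈ SLminus d, t = essSup (fun y => H (p + gradient w y) y) volume}

/-- Ĥ(p) = inf_{w ∈ 𝓢} esssup_y H(p + Dw(y), y). -/
def Hhat (d : ℕ) (H : Ed d → Ed d → ℝ) (p : Ed d) : ℝ :=
  sInf {t | ∃ w ∈ Scal d, t = essSup (fun y => H (p + gradient w y) y) volume}

/-- H̄* = inf_{w ∈ 𝓛} esssup_y H(Dw(y), y). -/
def Hstar (d : ℕ) (H : Ed d → Ed d → ℝ) : ℝ :=
  sInf {t | ∃ w ∈ LipFuns d, t = essSup (fun y => H (gradient w y) y) volume}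

/-- m_μ(y,x) = sup { w(y) − w(x) : w ∈ 𝓛, H(Dw,z) ≤ μ a.e. }. -/
def mMu (d : ℕ) (H : Ed d → Ed d → ℝ) (μ : ℝ) (y x : Ed d) : ℝ :=
  sSup {t | ∃ w ∈ LipFuns d, (∀ᵐ z ∂volume, H (gradient w z) z ≤ μ) ∧ t = w y - w x}

/-- Viscosity subsolution of F(Du, y) ≤ μ in U. -/
def ViscSub (d : ℕ) (F : Ed d → Ed d → ℝ) (μ : ℝ) (U : Set (Ed d)) (u : Ed d → ℝ) : Prop :=
  ∀ (φ : Ed d → ℝ) (x₀ : Ed d), x₀ ∈ U → ContDiffAt ℝ 1 φ x₀ →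
    IsLocalMaxOn (fun y => u y - φ y) U x₀ → F (gradient φ x₀) x₀ ≤ μ

/-- Viscosity supersolution of F(Dv, y) ≥ μ in U. -/
def ViscSuper (d : ℕ) (F : Ed d → Ed d → ℝ) (μ : ℝ) (U : Set (Ed d)) (v : Ed d → ℝ) : Prop :=
  ∀ (φ : Ed d → ℝ) (x₀ : Ed d), x₀ ∈ U → ContDiffAt ℝ 1 φ x₀ →
    IsLocalMinOn (fun y => v y - φ y) U x₀ → μ ≤ F (gradient φ x₀) x₀ 

open Metric


lemma ae_translate {d : ℕ} {P : Ed d → Prop} (h : ∀ᵐ z ∂(volume : Measure (Ed d)), P z)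
    (c : Ed d) : ∀ᵐ z ∂(volume : Measure (Ed d)), P (c + z) := by
  rw [ae_iff] at h ⊢
  have he : {z : Ed d | ¬ P (c + z)} = (fun z => c + z) ⁻¹' {z | ¬ P z} := rfl
  rw [he, measure_preimage_add]; exact h

lemma norm_gradient_eq {d : ℕ} (w : Ed d → ℝ) (z : Ed d) :
    ‖gradient w z‖ = ‖fderiv ℝ w z‖ := by
  simp [gradient, LinearIsometryEquiv.norm_map]

lemma lipBound {d : ℕ} {w : Ed d → ℝ} {K : ℝ≥0} (hw : LipschitzWith K w) {R : ℝ}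
    (hae : ∀ᵐ z ∂(volume : Measure (Ed d)), ‖gradient w z‖ ≤ R) (x y : Ed d) :
    w y - w x ≤ R * ‖y - x‖ := by
  have hfd : ∀ᵐ z ∂(volume : Measure (Ed d)), ‖fderiv ℝ w z‖ ≤ R := by
    filter_upwards [hae] with z hz using by rwa [norm_gradient_eq] at hz
  have key : ∀ ε : ℝ, 0 < ε → w y - w x ≤ R * ‖y - x‖ + 2 * K * ε := by
    intro ε hε
    set ρ : Measure (Ed d) := volume.restrict (closedBall 0 ε) with hρ
    haveI : IsFiniteMeasure ρ := by
      constructor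
      rw [hρ, Measure.restrict_apply_univ]
      exact measure_closedBall_lt_top
    set τ : ℝ := (ρ Set.univ).toReal with hτ
    have hτpos : 0 < τ := by
      rw [hτ, hρ, Measure.restrict_apply_univ]
      exact ENNReal.toReal_pos (measure_closedBall_pos volume 0 hε).ne'
        measure_closedBall_lt_top.ne
    have hcont : ∀ c : Ed d, Continuous (fun z : Ed d => w (c + z)) := fun c =>
      hw.continuous.comp (continuous_const.add continuous_id)
    have hint : ∀ c : Ed d, Integrable (fun z => w (c + z)) ρ := fun c =>
      ((hcont c).continuousOn).integrableOn_compact (isCompact_closedBall 0 ε)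
    set W : Ed d → ℝ := fun a => ∫ z, w (a + z) ∂ρ with hWdef
    -- Claim A : difference bound for the averaged function
    have claimA : ∀ a b : Ed d, W b - W a ≤ R * ‖b - a‖ * τ := by
      intro a b
      set u : Ed d := b - a with hu
      set D : ℝ → ℝ := fun t => ∫ z, (fderiv ℝ w (a + t • u + z)) u ∂ρ with hD
      have hg : ∀ t₀ : ℝ, HasDerivAt (fun t => ∫ z, w (a + t • u + z) ∂ρ) (D t₀) t₀ := by
        intro t₀
        have hdiffae : ∀ᵐ z ∂ρ, HasDerivAt (fun t => w (a + t • u + z))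
            ((fderiv ℝ w (a + t₀ • u + z)) u) t₀ := by
          have h1 : ∀ᵐ z ∂(volume : Measure (Ed d)),
              DifferentiableAt ℝ w ((a + t₀ • u) + z) :=
            ae_translate (hw.ae_differentiableAt) (a + t₀ • u)
          refine ae_restrict_of_ae ?_
          filter_upwards [h1] with z hz
          have hline : HasDerivAt (fun t : ℝ => a + t • u + z) u t₀ := by
            simpa using (((hasDerivAt_id t₀).smul_const u).const_add a).add_const z
          exact hz.hasFDerivAt.comp_hasDerivAt t₀ hline
        refine (hasDerivAt_integral_of_dominated_loc_of_lip (F := fun t z => w (a + t • u + z))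
          (bound := fun _ => (K : ℝ) * ‖u‖) (s := Set.univ) Filter.univ_mem ?_ (hint _) ?_ ?_ ?_ hdiffae).2
        · exact Eventually.of_forall fun t => (hcont (a + t • u)).aestronglyMeasurable
        · exact ((measurable_fderiv_apply_const ℝ w u).comp
            (measurable_const_add (a + t₀ • u))).aestronglyMeasurable
        · refine Eventually.of_forall fun z => ?_
          have hl : LipschitzWith (Real.nnabs ((K : ℝ) * ‖u‖)) (fun t : ℝ => w (a + t • u + z)) := by
            refine LipschitzWith.of_dist_le_mul fun s t => ?_
            have hst : (a + s • u + z) - (a + t • u + z) = (s - t) • u := by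
              rw [sub_smul]; abel
            calc dist (w (a + s • u + z)) (w (a + t • u + z))
                ≤ K * dist (a + s • u + z) (a + t • u + z) := hw.dist_le_mul _ _
              _ = ((K : ℝ) * ‖u‖) * dist s t := by
                  rw [dist_eq_norm, hst, norm_smul, dist_eq_norm, Real.norm_eq_abs]; ring
              _ = (Real.nnabs ((K : ℝ) * ‖u‖) : ℝ) * dist s t := by
                  rw [Real.coe_nnabs, abs_of_nonneg (by positivity)]
          exact hl.lipschitzOnWith
        · exact integrable_const _
      have hDb : ∀ t : ℝ, ‖D t‖ ≤ R * ‖u‖ * τ := by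
        intro t
        have haeρ : ∀ᵐ z ∂ρ, ‖(fderiv ℝ w (a + t • u + z)) u‖ ≤ R * ‖u‖ := by
          refine ae_restrict_of_ae ?_
          filter_upwards [ae_translate hfd (a + t • u)] with z hz
          calc ‖(fderiv ℝ w (a + t • u + z)) u‖
              ≤ ‖fderiv ℝ w (a + t • u + z)‖ * ‖u‖ := ContinuousLinearMap.le_opNorm _ _
            _ ≤ R * ‖u‖ := mul_le_mul_of_nonneg_right hz (norm_nonneg u)
        calc ‖D t‖ ≤ (R * ‖u‖) * (ρ Set.univ).toReal :=
              norm_integral_le_of_norm_le_const haeρ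
          _ = R * ‖u‖ * τ := by rw [hτ]
      have hmvt := norm_image_sub_le_of_norm_deriv_le_segment'
        (f := fun t => ∫ z, w (a + t • u + z) ∂ρ) (f' := D) (a := (0:ℝ)) (b := 1)
        (fun t _ => (hg t).hasDerivWithinAt) (fun t _ => hDb t) 1 (by norm_num)
      have e1 : (∫ z, w (a + (1:ℝ) • u + z) ∂ρ) = W b := by
        rw [hWdef]
        exact congrArg _ (funext fun z => congrArg w (by rw [one_smul, hu]; abel))
      have e0 : (∫ z, w (a + (0:ℝ) • u + z) ∂ρ) = W a := by
        rw [hWdef]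
        exact congrArg _ (funext fun z => congrArg w (by rw [zero_smul]; abel))
      try simp only at hmvt
      rw [e1, e0, Real.norm_eq_abs] at hmvt
      calc W b - W a ≤ |W b - W a| := le_abs_self _
        _ ≤ R * ‖u‖ * τ * (1 - 0) := hmvt
        _ = R * ‖u‖ * τ := by ring
    -- Claim B : averaged function is close to τ • w
    have claimB : ∀ a : Ed d, |W a - τ * w a| ≤ (K : ℝ) * ε * τ := by
      intro a
      have hconst : Integrable (fun _ : Ed d => w a) ρ := integrable_const _
      have hdiff : W a - τ * w a = ∫ z, (w (a + z) - w a) ∂ρ := by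
        rw [integral_sub (hint a) hconst, integral_const, smul_eq_mul, hWdef, hτ]; rfl
      have hb : ∀ᵐ z ∂ρ, ‖w (a + z) - w a‖ ≤ (K : ℝ) * ε := by
        refine (ae_restrict_mem measurableSet_closedBall).mono fun z hz => ?_
        have h1 : ‖w (a + z) - w a‖ ≤ (K : ℝ) * ‖z‖ := by
          have := hw.dist_le_mul (a + z) a
          simpa [dist_eq_norm, add_sub_cancel_left] using this
        have h2 : ‖z‖ ≤ ε := by simpa using hz
        exact h1.trans (mul_le_mul_of_nonneg_left h2 K.coe_nonneg)
      rw [hdiff, ← Real.norm_eq_abs]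
      calc ‖∫ z, (w (a + z) - w a) ∂ρ‖ ≤ ((K : ℝ) * ε) * (ρ Set.univ).toReal :=
            norm_integral_le_of_norm_le_const hb
        _ = (K : ℝ) * ε * τ := by rw [hτ]
    have hA := claimA x y
    have hBy := abs_le.mp (claimB y)
    have hBx := abs_le.mp (claimB x)
    have hτle : τ * (w y - w x) ≤ τ * (R * ‖y - x‖ + 2 * K * ε) := by nlinarith
    exact (mul_le_mul_iff_right₀ hτpos).mp hτle
  refine le_of_forall_pos_le_add fun ε' hε' => ?_
  have hc1 : (0:ℝ) < 2 * (K : ℝ) + 1 := by positivity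
  have h := key (ε' / (2 * (K : ℝ) + 1)) (by positivity)
  have hq : (2 * (K : ℝ) + 1) * (ε' / (2 * (K : ℝ) + 1)) = ε' := mul_div_cancel₀ _ hc1.ne'
  have hq0 : 0 ≤ ε' / (2 * (K : ℝ) + 1) := by positivity
  nlinarith

/-- strict monotonicity of μ ↦ m_μ, quantitatively. -/
theorem statement_10
    (d : ℕ) (hd : 0 < d)
    (H : Ed d → Ed d → ℝ)
    (hHcont : Continuous fun q : Ed d × Ed d => H q.1 q.2)
    (hreg_bdd : ∀ R : ℝ, 0 < R → ∃ M : ℝ, ∀ p y : Ed d, ‖p‖ ≤ R → |H p y| ≤ M)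
    (hreg_uc : ∀ R : ℝ, 0 < R → ∀ ε : ℝ, 0 < ε → ∃ δ : ℝ, 0 < δ ∧ ∀ p p' y y' : Ed d,
      ‖p‖ ≤ R → ‖p'‖ ≤ R → ‖p - p'‖ < δ → ‖y - y'‖ < δ → |H p y - H p' y'| < ε)
    (hcoer : ∀ M : ℝ, ∃ R : ℝ, ∀ p y : Ed d, R ≤ ‖p‖ → M ≤ H p y)
    (hqc : ∀ p q y : Ed d, H ((1/2 : ℝ) • (p + q)) y ≤ max (H p y) (H q y))
    (Λ : ℝ → ℝ → ℝ)
    (hΛcont : Continuous fun m : ℝ × ℝ => Λ m.1 m.2)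
    (hΛmono : ∀ a b a' b' : ℝ, a ≤ a' → b ≤ b' → Λ a b ≤ Λ a' b')
    (hΛstrict : ∀ a b : ℝ, a ≠ b → Λ a b < max a b)
    (hsqc : ∀ p q y : Ed d, H ((1/2 : ℝ) • (p + q)) y ≤ Λ (H p y) (H q y))
    :
    ∀ k : ℝ, 1 < k → ∃ c : ℝ, 0 < c ∧
      ∀ μ ν : ℝ, Hstar d H < ν → ν < μ → μ ≤ k → 1 / k ≤ μ - ν →
        ∀ x y : Ed d, mMu d H ν y x + c * ‖x - y‖ ≤ mMu d H μ y x := by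
  intro k hk
  have hk0 : (0:ℝ) < k := by linarith
  obtain ⟨R₀, hR₀⟩ := hcoer (k + 1)
  set R₁ : ℝ := max R₀ 0 with hR₁
  have hR₁0 : (0:ℝ) ≤ R₁ := le_max_right _ _
  have hRpos : (0:ℝ) < R₁ + 1 := by linarith
  obtain ⟨δ, hδpos, hδ⟩ := hreg_uc (R₁ + 1) hRpos (1 / k) (one_div_pos.mpr hk0)
  refine ⟨min (δ / 2) 1, by positivity, ?_⟩
  intro μ ν hν hνμ hμk hgap x y
  set c := min (δ / 2) 1 with hc
  have hc0 : 0 < c := by positivity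
  have hc1 : c ≤ 1 := min_le_right _ _
  have hcδ : c < δ := lt_of_le_of_lt (min_le_left _ _) (by linarith)
  -- a.e. gradient bound for admissible functions at any level ≤ k
  have hgrad : ∀ (w : Ed d → ℝ) (lam : ℝ), lam ≤ k →
      (∀ᵐ z ∂(volume : Measure (Ed d)), H (gradient w z) z ≤ lam) →
      (∀ᵐ z ∂(volume : Measure (Ed d)), ‖gradient w z‖ ≤ R₁) := by
    intro w lam hlam hae
    filter_upwards [hae] with z hz
    by_contra hcon
    push_neg at hcon
    have h1 : R₀ ≤ ‖gradient w z‖ := (le_max_left R₀ 0).trans hcon.le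
    have h2 := hR₀ (gradient w z) z h1
    linarith
  -- the admissible set at level μ is bounded above
  have hBdd : BddAbove {t | ∃ w ∈ LipFuns d,
      (∀ᵐ z ∂(volume : Measure (Ed d)), H (gradient w z) z ≤ μ) ∧ t = w y - w x} := by
    refine ⟨R₁ * ‖y - x‖, ?_⟩
    rintro t ⟨w, ⟨Kw, hKw⟩, hwae, rfl⟩
    exact lipBound hKw (hgrad w μ hμk hwae) x y
  -- existence of a strict subsolution from Hstar < ν
  have hTne : Set.Nonempty {t | ∃ w ∈ LipFuns d,
      t = essSup (fun z => H (gradient w z) z) volume} :=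
    ⟨_, (fun _ : Ed d => (0:ℝ)), ⟨0, LipschitzWith.const 0⟩, rfl⟩
  have hHs : sInf {t | ∃ w ∈ LipFuns d,
      t = essSup (fun z => H (gradient w z) z) volume} < ν := hν
  obtain ⟨t₀, ht₀mem, ht₀lt⟩ := exists_lt_of_csInf_lt hTne hHs
  obtain ⟨w₀, hw₀L, ht₀⟩ := ht₀mem
  obtain ⟨K₀, hK₀⟩ := hw₀L
  obtain ⟨M, hM⟩ := hreg_bdd ((K₀ : ℝ) + 1) (by positivity)
  have hgb : ∀ z : Ed d, ‖gradient w₀ z‖ ≤ (K₀ : ℝ) + 1 := by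
    intro z
    rw [norm_gradient_eq]
    exact le_trans (norm_fderiv_le_of_lipschitz ℝ hK₀) (by linarith)
  have hbd : IsBoundedUnder (· ≤ ·) (ae (volume : Measure (Ed d)))
      (fun z => H (gradient w₀ z) z) :=
    isBoundedUnder_of ⟨M, fun z => (abs_le.mp (hM _ z (hgb z))).2⟩
  have hw₀ae : ∀ᵐ z ∂(volume : Measure (Ed d)), H (gradient w₀ z) z ≤ ν := by
    have hlim : Filter.limsup (fun z => H (gradient w₀ z) z)
        (ae (volume : Measure (Ed d))) < ν := by
      have : essSup (fun z => H (gradient w₀ z) z) volume < ν := ht₀ ▸ ht₀lt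
      simpa [essSup] using this
    exact (Filter.eventually_lt_of_limsup_lt hlim hbd).mono fun z hz => hz.le
  have hSνne : Set.Nonempty {t | ∃ w ∈ LipFuns d,
      (∀ᵐ z ∂(volume : Measure (Ed d)), H (gradient w z) z ≤ ν) ∧ t = w y - w x} :=
    ⟨w₀ y - w₀ x, w₀, ⟨K₀, hK₀⟩, hw₀ae, rfl⟩
  -- key step : adding the cone
  have hstep : ∀ t ∈ {t | ∃ w ∈ LipFuns d,
      (∀ᵐ z ∂(volume : Measure (Ed d)), H (gradient w z) z ≤ ν) ∧ t = w y - w x},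
      t + c * ‖x - y‖ ≤ mMu d H μ y x := by
    rintro t ⟨w, ⟨Kw, hKw⟩, hwae, rfl⟩
    set g : Ed d → ℝ := fun z => c * ‖z - x‖ with hgdef
    have hgL : LipschitzWith c.toNNReal g := by
      refine LipschitzWith.of_dist_le_mul fun z z' => ?_
      have h1 : |‖z - x‖ - ‖z' - x‖| ≤ ‖z - z'‖ := by
        have h2 := abs_norm_sub_norm_le (z - x) (z' - x)
        simpa [sub_sub_sub_cancel_right] using h2
      calc dist (g z) (g z') = c * |‖z - x‖ - ‖z' - x‖| := by
            rw [hgdef]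
            simp only [Real.dist_eq, ← mul_sub, abs_mul, abs_of_nonneg hc0.le]
        _ ≤ c * ‖z - z'‖ := mul_le_mul_of_nonneg_left h1 hc0.le
        _ = c.toNNReal * dist z z' := by
            rw [Real.coe_toNNReal _ hc0.le, dist_eq_norm]
    set v : Ed d → ℝ := fun z => w z + g z with hvdef
    have hvL : v ∈ LipFuns d := ⟨Kw + c.toNNReal, hKw.add hgL⟩
    haveI : Nonempty (Fin d) := ⟨⟨0, hd⟩⟩
    have hxnull : ∀ᵐ z ∂(volume : Measure (Ed d)), z ≠ x := by
      rw [ae_iff]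
      have he : {z : Ed d | ¬ z ≠ x} = {x} := by
        ext z; simp [not_not]
      rw [he]
      exact measure_singleton x
    have hvae : ∀ᵐ z ∂(volume : Measure (Ed d)), H (gradient v z) z ≤ μ := by
      filter_upwards [hwae, hgrad w ν (by linarith) hwae, hKw.ae_differentiableAt, hxnull]
        with z hz hzn hzd hzx
      have hgd : DifferentiableAt ℝ g z := by
        have h1 : DifferentiableAt ℝ (fun u : Ed d => u - x) z := (differentiable_id.sub_const x) z
        exact (h1.norm ℝ (sub_ne_zero.mpr hzx)).const_mul c
      have hgradv : gradient v z = gradient w z + gradient g z := by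
        simp only [hvdef, gradient]
        rw [fderiv_fun_add hzd hgd, map_add]
      have hgg : ‖gradient g z‖ ≤ c := by
        rw [norm_gradient_eq]
        have := norm_fderiv_le_of_lipschitz ℝ hgL (x₀ := z)
        rwa [Real.coe_toNNReal _ hc0.le] at this
      have hnv : ‖gradient v z‖ ≤ R₁ + 1 := by
        rw [hgradv]
        exact (norm_add_le _ _).trans (by linarith)
      have hpp' : ‖gradient w z - gradient v z‖ < δ := by
        have he : gradient w z - gradient v z = -gradient g z := by rw [hgradv]; abel
        rw [he, norm_neg]
        exact lt_of_le_of_lt hgg hcδ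
      have hHd := hδ (gradient w z) (gradient v z) z z (by linarith) hnv hpp'
        (by simpa using hδpos)
      have hlt : H (gradient v z) z - H (gradient w z) z < 1 / k := (abs_sub_lt_iff.mp hHd).2
      linarith
    have hval : v y - v x = (w y - w x) + c * ‖x - y‖ := by
      show (w y + c * ‖y - x‖) - (w x + c * ‖x - x‖) = (w y - w x) + c * ‖x - y‖
      rw [sub_self, norm_zero, norm_sub_rev y x]
      ring
    have hmem : (w y - w x) + c * ‖x - y‖ ∈ {t | ∃ w ∈ LipFuns d,
        (∀ᵐ z ∂(volume : Measure (Ed d)), H (gradient w z) z ≤ μ) ∧ t = w y - w x} :=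
      ⟨v, hvL, hvae, hval.symm⟩
    exact le_csSup hBdd hmem
  have hfin : sSup {t | ∃ w ∈ LipFuns d,
      (∀ᵐ z ∂(volume : Measure (Ed d)), H (gradient w z) z ≤ ν) ∧ t = w y - w x}
      ≤ mMu d H μ y x - c * ‖x - y‖ :=
    csSup_le hSνne fun t ht => by linarith [hstep t ht]
  have hmν : mMu d H ν y x = sSup {t | ∃ w ∈ LipFuns d,
      (∀ᵐ z ∂(volume : Measure (Ed d)), H (gradient w z) z ≤ ν) ∧ t = w y - w x} := rfl
  rw [hmν]
  linarith
end
end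

section
/- Let μ > H̄* and w ∈ 𝓛. Then w(y) − w(x) ≤ m_μ(y,x) for every x, y ∈ ℝ^d if and only if H(Dw(y), y) ≤ μ for almost every y ∈ ℝ^d. -/
open MeasureTheory Filter Topology Bornology
open scoped RealInnerProductSpace NNReal

set_option maxHeartbeats 1000000

noncomputable section

lemma inner_gradient_eq {d : ℕ} (u : Ed d → ℝ) (z v : Ed d) :
    ⟪gradient u z, v⟫ = fderiv ℝ u z v := by
  unfold gradient
  exact InnerProductSpace.toDual_symm_apply

lemma norm_gradient_le {d : ℕ} {u : Ed d → ℝ} {C : ℝ≥0} (h : LipschitzWith C u) (z : Ed d) :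
    ‖gradient u z‖ ≤ C := by
  unfold gradient
  rw [LinearIsometryEquiv.norm_map]
  exact norm_fderiv_le_of_lipschitz ℝ h

lemma oneDim {g : ℝ → ℝ} {C : ℝ≥0} (hg : LipschitzWith C g) {c : ℝ}
    (hae : ∀ᵐ t ∂(volume : Measure ℝ), t ∈ Set.Ioo (0:ℝ) 1 →
      HasDerivAt g (deriv g t) t ∧ deriv g t ≤ c) :
    g 1 - g 0 ≤ c := by
  have hgc : Continuous g := hg.continuous
  set h : ℕ → ℝ := fun n => 1 / (n + 1) with hh
  have hpos : ∀ n, 0 < h n := fun n => by positivity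
  have hten : Tendsto h atTop (nhds 0) := tendsto_one_div_add_atTop_nhds_zero_nat
  set A : ℕ → ℝ := fun n => ∫ t in (0:ℝ)..1, (g (t + h n) - g t) / h n with hA
  have hint : ∀ a b : ℝ, IntervalIntegrable g volume a b :=
    fun a b => hgc.intervalIntegrable a b
  -- step (a): lower bound for A n
  have key : ∀ n, g 1 - g 0 - 2 * C * h n ≤ A n := by
    intro n
    have e1 : A n = ((∫ t in (h n)..(1 + h n), g t) - ∫ t in (0:ℝ)..1, g t) / h n := by
      show (∫ t in (0:ℝ)..1, (g (t + h n) - g t) / h n) = _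
      rw [intervalIntegral.integral_div]
      congr 1
      rw [intervalIntegral.integral_sub (by
        exact (hgc.comp (continuous_id.add continuous_const)).intervalIntegrable 0 1) (hint 0 1)]
      congr 1
      simpa using intervalIntegral.integral_comp_add_right g (h n)
    have e2 : (∫ t in (h n)..(1 + h n), g t) - ∫ t in (0:ℝ)..1, g t
        = (∫ t in (1:ℝ)..(1 + h n), g t) - ∫ t in (0:ℝ)..(h n), g t := by
      have s1 : (∫ t in (h n)..(1:ℝ), g t) + (∫ t in (1:ℝ)..(1 + h n), g t)
          = ∫ t in (h n)..(1 + h n), g t :=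
        intervalIntegral.integral_add_adjacent_intervals (hint _ _) (hint _ _)
      have s2 : (∫ t in (0:ℝ)..(h n), g t) + (∫ t in (h n)..(1:ℝ), g t)
          = ∫ t in (0:ℝ)..1, g t :=
        intervalIntegral.integral_add_adjacent_intervals (hint _ _) (hint _ _)
      linarith
    have hend : ∀ b : ℝ, |(∫ t in b..(b + h n), g t) - h n * g b| ≤ C * h n * h n := by
      intro b
      have heq : (∫ t in b..(b + h n), g t) - h n * g b
          = ∫ t in b..(b + h n), (g t - g b) := by
        rw [intervalIntegral.integral_sub (hint _ _) (intervalIntegrable_const)]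
        simp [mul_comm]
      rw [heq]
      have hb : ∀ t ∈ Set.uIoc b (b + h n), ‖g t - g b‖ ≤ C * h n := by
        intro t ht
        have h1 : |g t - g b| ≤ C * |t - b| := by
          simpa [Real.dist_eq] using hg.dist_le_mul t b
        have h2 : |t - b| ≤ h n := by
          rcases Set.mem_uIoc.1 ht with h' | h'
          · rw [abs_of_pos (by linarith [h'.1])]; linarith [h'.2]
          · rcases h' with ⟨h3, h4⟩; nlinarith [hpos n]
        calc ‖g t - g b‖ = |g t - g b| := rfl
          _ ≤ C * |t - b| := h1
          _ ≤ C * h n := by nlinarith [NNReal.coe_nonneg C]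
      have hni := intervalIntegral.norm_integral_le_of_norm_le_const hb
      calc |∫ t in b..(b + h n), (g t - g b)| = ‖∫ t in b..(b + h n), (g t - g b)‖ := rfl
        _ ≤ C * h n * |b + h n - b| := hni
        _ = C * h n * h n := by rw [show b + h n - b = h n by ring, abs_of_pos (hpos n)]
    have hb1 := abs_le.1 (hend 1)
    have hb0 := abs_le.1 (hend 0)
    rw [e1, e2, le_div_iff₀ (hpos n)]
    have h0 : (∫ t in (0:ℝ)..(h n), g t) = ∫ t in (0:ℝ)..(0 + h n), g t := by norm_num
    rw [h0]
    nlinarith [hpos n, hb1.1, hb1.2, hb0.1, hb0.2]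
  -- step (c): DCT
  have hlim : Tendsto A atTop (nhds (∫ t in (0:ℝ)..1, deriv g t)) := by
    have h01 : (0:ℝ) ≤ 1 := by norm_num
    have hrw : ∀ n, A n = ∫ t in Set.Ioc (0:ℝ) 1, (g (t + h n) - g t) / h n := by
      intro n
      show (∫ t in (0:ℝ)..1, (g (t + h n) - g t) / h n) = _
      rw [intervalIntegral.integral_of_le h01]
    have hrw2 : (∫ t in (0:ℝ)..1, deriv g t) = ∫ t in Set.Ioc (0:ℝ) 1, deriv g t := by
      rw [intervalIntegral.integral_of_le h01]
    have hfeq : A = fun n => ∫ t in Set.Ioc (0:ℝ) 1, (g (t + h n) - g t) / h n :=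
      funext fun n => hrw n
    rw [hfeq, hrw2]
    apply MeasureTheory.tendsto_integral_of_dominated_convergence (fun _ => (C:ℝ))
    · intro n
      exact ((hgc.comp (continuous_id.add continuous_const)).sub hgc |>.div_const _).aestronglyMeasurable
    · exact integrable_const _
    · intro n
      filter_upwards with t
      have h1 : |g (t + h n) - g t| ≤ C * |t + h n - t| := by
        simpa [Real.dist_eq] using hg.dist_le_mul (t + h n) t
      rw [show t + h n - t = h n by ring, abs_of_pos (hpos n)] at h1
      rw [Real.norm_eq_abs, abs_div, abs_of_pos (hpos n), div_le_iff₀ (hpos n)]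
      simpa using h1
    · have h2 : ∀ᵐ t ∂(volume.restrict (Set.Ioc (0:ℝ) 1)), t ∈ Set.Ioo (0:ℝ) 1 →
          HasDerivAt g (deriv g t) t ∧ deriv g t ≤ c :=
        ae_restrict_of_ae hae
      have h3 : ∀ᵐ t ∂(volume.restrict (Set.Ioc (0:ℝ) 1)), t ∈ Set.Ioo (0:ℝ) 1 := by
        have hmem : ∀ᵐ t ∂(volume.restrict (Set.Ioc (0:ℝ) 1)), t ∈ Set.Ioc (0:ℝ) 1 :=
          ae_restrict_mem measurableSet_Ioc
        have hone : ∀ᵐ t ∂(volume.restrict (Set.Ioc (0:ℝ) 1)), t ≠ 1 := by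
          refine ae_restrict_of_ae ?_
          exact measure_mono_null (fun t ht => by simpa using ht) Real.volume_singleton
        filter_upwards [hmem, hone] with t ht hne
        exact ⟨ht.1, lt_of_le_of_ne ht.2 hne⟩
      filter_upwards [h2, h3] with t ht htioo
      obtain ⟨hder, _⟩ := ht htioo
      have hsl := hasDerivAt_iff_tendsto_slope.1 hder
      have hseq : Tendsto (fun n => t + h n) atTop (nhdsWithin t {t}ᶜ) := by
        apply tendsto_nhdsWithin_of_tendsto_nhds_of_eventually_within
        · simpa using tendsto_const_nhds.add hten
        · filter_upwards with n
          simp only [Set.mem_compl_iff, Set.mem_singleton_iff]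
          intro hcontra
          have := hpos n; linarith [congrArg (· - t) hcontra]
      have hcomp := hsl.comp hseq
      convert hcomp using 2 with n
      simp only [slope, Function.comp_apply, add_sub_cancel_left, vsub_eq_sub, div_eq_inv_mul, smul_eq_mul]
  -- deriv g integrable and ≤ c
  have hbdd : ∀ᵐ t ∂(volume.restrict (Set.Ioc (0:ℝ) 1)),
      HasDerivAt g (deriv g t) t ∧ deriv g t ≤ c := by
    have h2 : ∀ᵐ t ∂(volume.restrict (Set.Ioc (0:ℝ) 1)), t ∈ Set.Ioo (0:ℝ) 1 →
        HasDerivAt g (deriv g t) t ∧ deriv g t ≤ c := ae_restrict_of_ae hae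
    have hmem : ∀ᵐ t ∂(volume.restrict (Set.Ioc (0:ℝ) 1)), t ∈ Set.Ioc (0:ℝ) 1 :=
      ae_restrict_mem measurableSet_Ioc
    have hone : ∀ᵐ t ∂(volume.restrict (Set.Ioc (0:ℝ) 1)), t ≠ 1 :=
      ae_restrict_of_ae (measure_mono_null (fun t ht => by simpa using ht) Real.volume_singleton)
    filter_upwards [h2, hmem, hone] with t ht h4 h5
    exact ht ⟨h4.1, lt_of_le_of_ne h4.2 h5⟩
  have hintg : IntegrableOn (fun t => deriv g t) (Set.Ioc (0:ℝ) 1) volume := by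
    apply MeasureTheory.Integrable.mono' (integrable_const (C:ℝ))
      ((measurable_deriv g).aestronglyMeasurable)
    filter_upwards [hbdd] with t ht
    exact ht.1.le_of_lipschitz hg
  have hintderiv : (∫ t in (0:ℝ)..1, deriv g t) ≤ c := by
    rw [intervalIntegral.integral_of_le (by norm_num : (0:ℝ) ≤ 1)]
    calc (∫ t in Set.Ioc (0:ℝ) 1, deriv g t) ≤ ∫ _ in Set.Ioc (0:ℝ) 1, c := by
          apply integral_mono_ae hintg (integrable_const c)
          filter_upwards [hbdd] with t ht using ht.2
      _ = c := by simp [Real.volume_Ioc]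
  have htend : Tendsto (fun n => A n + 2 * C * h n) atTop (nhds ((∫ t in (0:ℝ)..1, deriv g t) + 0)) := by
    apply hlim.add
    simpa using (tendsto_const_nhds (x := 2 * (C:ℝ))).mul hten
  rw [add_zero] at htend
  have hle : g 1 - g 0 ≤ (∫ t in (0:ℝ)..1, deriv g t) :=
    ge_of_tendsto htend (by filter_upwards with n using by linarith [key n])
  linarith

/-- Fubini-type lemma: an a.e. property holds, for a.e. translate, a.e. along a line. -/
lemma fub {d : ℕ} (P : Ed d → Prop) (hP : ∀ᵐ z ∂(volume : Measure (Ed d)), P z)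
    (x v : Ed d) :
    ∀ᵐ a ∂(volume : Measure (Ed d)), ∀ᵐ t ∂(volume : Measure ℝ), P (x + a + t • v) := by
  obtain ⟨N, hNsub, hNmeas, hNnull⟩ :=
    exists_measurable_superset_of_null (by simpa [ae_iff] using hP : volume {z | ¬ P z} = 0)
  have hT : Measurable fun q : Ed d × ℝ => x + q.1 + q.2 • v := by
    fun_prop
  have hE : ((volume : Measure (Ed d)).prod (volume : Measure ℝ))
      ((fun q : Ed d × ℝ => x + q.1 + q.2 • v) ⁻¹' N) = 0 := by
    rw [Measure.prod_apply_symm (hT hNmeas)]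
    have : ∀ t : ℝ, (volume : Measure (Ed d))
        ((fun a : Ed d => (a, t)) ⁻¹' ((fun q : Ed d × ℝ => x + q.1 + q.2 • v) ⁻¹' N)) = 0 := by
      intro t
      have : ((fun a : Ed d => (a, t)) ⁻¹' ((fun q : Ed d × ℝ => x + q.1 + q.2 • v) ⁻¹' N))
          = (fun a : Ed d => a + (x + t • v)) ⁻¹' N := by
        ext a
        have : x + a + t • v = a + (x + t • v) := by module
        simp [Set.mem_preimage, this]
      rw [this, measure_preimage_add_right _ _ _]
      exact hNnull
    simp [this]
  have hae : ∀ᵐ q ∂((volume : Measure (Ed d)).prod (volume : Measure ℝ)),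
      x + q.1 + q.2 • v ∉ N := by
    rw [ae_iff]
    simpa [Set.preimage] using hE
  have := Measure.ae_ae_of_ae_prod hae
  filter_upwards [this] with a ha
  filter_upwards [ha] with t ht
  by_contra hcon
  exact ht (hNsub hcon)

/-- Segment estimate: if a.e. on a ball the directional derivative of a Lipschitz
function is at most `c`, then the increment between two points well inside the ball
is at most `c`. -/
lemma segEst {d : ℕ} {u : Ed d → ℝ} {C : ℝ≥0} (hu : LipschitzWith C u)
    (z₀ : Ed d) (δ c : ℝ) (x y : Ed d)
    (hx : dist x z₀ < δ / 2) (hy : dist y z₀ < δ / 2)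
    (hae : ∀ᵐ z ∂(volume : Measure (Ed d)), z ∈ Metric.ball z₀ δ →
      DifferentiableAt ℝ u z ∧ ⟪gradient u z, y - x⟫ ≤ c) :
    u y - u x ≤ c := by
  have hδ : 0 < δ := by have := lt_of_le_of_lt dist_nonneg hx; linarith
  set v : Ed d := y - x with hv
  have haff : ∀ a : Ed d, LipschitzWith ‖v‖₊ (fun t : ℝ => x + a + t • v) := by
    intro a
    apply LipschitzWith.of_dist_le_mul
    intro s t
    have : (x + a + s • v) - (x + a + t • v) = (s - t) • v := by module
    rw [dist_eq_norm, this, norm_smul]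
    rw [dist_eq_norm]
    simp [Real.norm_eq_abs, mul_comm]
  have claimA : ∀ᵐ a ∂(volume : Measure (Ed d)), ‖a‖ < δ / 4 →
      u (y + a) - u (x + a) ≤ c := by
    filter_upwards [fub _ hae x v] with a ha haa
    set g : ℝ → ℝ := fun t => u (x + a + t • v) with hg
    have hgl : LipschitzWith (C * ‖v‖₊) g := hu.comp (haff a)
    have h1 : g 1 = u (y + a) := by
      show u (x + a + (1:ℝ) • v) = u (y + a)
      congr 1; rw [hv]; module
    have h0 : g 0 = u (x + a) := by
      show u (x + a + (0:ℝ) • v) = u (x + a)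
      congr 1; module
    rw [← h1, ← h0]
    apply oneDim hgl
    filter_upwards [ha] with t ht htIoo
    have hzball : x + a + t • v ∈ Metric.ball z₀ δ := by
      have hdx : ‖x + a - z₀‖ < 3 * δ / 4 := by
        calc ‖x + a - z₀‖ = ‖(x - z₀) + a‖ := by congr 1; module
          _ ≤ ‖x - z₀‖ + ‖a‖ := norm_add_le _ _
          _ < δ / 2 + δ / 4 := by
              apply add_lt_add _ haa
              rwa [← dist_eq_norm]
          _ = 3 * δ / 4 := by ring
      have hdy : ‖y + a - z₀‖ < 3 * δ / 4 := by
        calc ‖y + a - z₀‖ = ‖(y - z₀) + a‖ := by congr 1; module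
          _ ≤ ‖y - z₀‖ + ‖a‖ := norm_add_le _ _
          _ < δ / 2 + δ / 4 := by
              apply add_lt_add _ haa
              rwa [← dist_eq_norm]
          _ = 3 * δ / 4 := by ring
      have hcomb : x + a + t • v - z₀ = (1 - t) • (x + a - z₀) + t • (y + a - z₀) := by
        rw [hv]; module
      rw [Metric.mem_ball, dist_eq_norm, hcomb]
      calc ‖(1 - t) • (x + a - z₀) + t • (y + a - z₀)‖
          ≤ ‖(1 - t) • (x + a - z₀)‖ + ‖t • (y + a - z₀)‖ := norm_add_le _ _
        _ = (1 - t) * ‖x + a - z₀‖ + t * ‖y + a - z₀‖ := by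
            rw [norm_smul, norm_smul, Real.norm_eq_abs, Real.norm_eq_abs,
              abs_of_nonneg (by linarith [htIoo.2] : (0:ℝ) ≤ 1 - t),
              abs_of_nonneg (le_of_lt htIoo.1)]
        _ ≤ (1 - t) * (3 * δ / 4) + t * (3 * δ / 4) := by
            apply add_le_add
            · exact mul_le_mul_of_nonneg_left hdx.le (by linarith [htIoo.2])
            · exact mul_le_mul_of_nonneg_left hdy.le (le_of_lt htIoo.1)
        _ = 3 * δ / 4 := by ring
        _ < δ := by linarith
    obtain ⟨hdiff, hinner⟩ := ht hzball
    have haffd : HasDerivAt (fun t : ℝ => x + a + t • v) v t := by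
      have h' : HasDerivAt (fun t : ℝ => t • v) ((1:ℝ) • v) t :=
        (hasDerivAt_id t).smul_const v
      rw [one_smul] at h'
      exact h'.const_add (x + a)
    have hder : HasDerivAt g (fderiv ℝ u (x + a + t • v) v) t :=
      (hdiff.hasFDerivAt.comp_hasDerivAt t haffd)
    refine ⟨hder.deriv ▸ hder, ?_⟩
    rw [hder.deriv, ← inner_gradient_eq]
    exact hinner
  -- conclude by continuity
  have hGcont : Continuous fun a : Ed d => u (y + a) - u (x + a) :=
    ((hu.continuous.comp (continuous_const.add continuous_id)).sub
      (hu.continuous.comp (continuous_const.add continuous_id)))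
  by_contra hcon
  push_neg at hcon
  have hUopen : IsOpen {a : Ed d | ‖a‖ < δ / 4 ∧ c < u (y + a) - u (x + a)} :=
    (isOpen_lt continuous_norm continuous_const).inter (isOpen_lt continuous_const hGcont)
  have hU0 : (0 : Ed d) ∈ {a : Ed d | ‖a‖ < δ / 4 ∧ c < u (y + a) - u (x + a)} := by
    constructor
    · simp; positivity
    · simpa using hcon
  have hpos := hUopen.measure_pos (volume : Measure (Ed d)) ⟨0, hU0⟩
  have hnull : (volume : Measure (Ed d)) {a : Ed d | ‖a‖ < δ / 4 ∧ c < u (y + a) - u (x + a)} = 0 := by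
    rw [← le_zero_iff]
    calc (volume : Measure (Ed d)) {a : Ed d | ‖a‖ < δ / 4 ∧ c < u (y + a) - u (x + a)}
        ≤ volume {a : Ed d | ¬ (‖a‖ < δ / 4 → u (y + a) - u (x + a) ≤ c)} := by
          apply measure_mono
          intro a ha
          simp only [Set.mem_setOf_eq] at *
          push_neg
          exact ⟨ha.1, ha.2⟩
      _ = 0 := by rw [← ae_iff] ; exact claimA
  rw [hnull] at hpos
  exact lt_irrefl _ hpos

/-- A closed midpoint-convex set is convex. -/
lemma midClosedConvex {d : ℕ} {S : Set (Ed d)} (hcl : IsClosed S)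
    (hmid : ∀ a ∈ S, ∀ b ∈ S, (1/2 : ℝ) • (a + b) ∈ S) : Convex ℝ S := by
  intro a ha b hb s t hs ht hst
  set D : Set ℝ := {r : ℝ | r ∈ Set.Icc (0:ℝ) 1 ∧ a + r • (b - a) ∈ S} with hD
  have hD0 : (0:ℝ) ∈ D := by
    constructor
    · exact ⟨le_refl 0, zero_le_one⟩
    · simpa using ha
  have hD1 : (1:ℝ) ∈ D := by
    constructor
    · exact ⟨zero_le_one, le_refl 1⟩
    · have : a + (1:ℝ) • (b - a) = b := by module
      rw [this]; exact hb
  have hDmid : ∀ r ∈ D, ∀ r' ∈ D, (r + r') / 2 ∈ D := by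
    intro r hr r' hr'
    constructor
    · refine ⟨by linarith [hr.1.1, hr'.1.1], by linarith [hr.1.2, hr'.1.2]⟩
    · have heq : a + ((r + r') / 2) • (b - a)
          = (1/2 : ℝ) • ((a + r • (b - a)) + (a + r' • (b - a))) := by
        have hhalf : (r + r')/2 = (1/2 : ℝ) * (r + r') := by ring
        rw [hhalf]; module
      rw [heq]
      exact hmid _ hr.2 _ hr'.2
  have hdy : ∀ n : ℕ, ∀ k : ℕ, k ≤ 2 ^ n → ((k : ℝ) / 2 ^ n) ∈ D := by
    intro n
    induction n with
    | zero =>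
      intro k hk
      interval_cases k
      · simpa using hD0
      · simpa using hD1
    | succ n ih =>
      intro k hk
      rcases Nat.even_or_odd k with ⟨j, hj⟩ | ⟨j, hj⟩
      · subst hj
        have hjle : j ≤ 2 ^ n := by
          have : 2 * j ≤ 2 * 2 ^ n := by rw [← pow_succ']; omega
          omega
        have : ((j + j : ℕ) : ℝ) / 2 ^ (n + 1) = (j : ℝ) / 2 ^ n := by
          push_cast; rw [pow_succ]; field_simp; ring
        rw [this]
        exact ih j hjle
      · subst hj
        have hjlt : j < 2 ^ n := by
          have h2 : 2 * j + 1 ≤ 2 * 2 ^ n := by rw [← pow_succ']; omega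
          omega
        have heq : ((2 * j + 1 : ℕ) : ℝ) / 2 ^ (n + 1)
            = ((j : ℝ) / 2 ^ n + ((j + 1 : ℕ) : ℝ) / 2 ^ n) / 2 := by
          push_cast; rw [pow_succ]; field_simp; ring
        rw [heq]
        exact hDmid _ (ih j hjlt.le) _ (ih (j + 1) hjlt)
  have hDcl : IsClosed D := by
    have h1 : IsClosed (Set.Icc (0:ℝ) 1) := isClosed_Icc
    have h2 : IsClosed {r : ℝ | a + r • (b - a) ∈ S} :=
      hcl.preimage (by fun_prop : Continuous fun r : ℝ => a + r • (b - a))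
    exact h1.inter h2
  have htD : t ∈ D := by
    have htcl : t ∈ closure D := by
      rw [Metric.mem_closure_iff]
      intro ε hε
      obtain ⟨n, hn⟩ := pow_unbounded_of_one_lt (ε⁻¹) (by norm_num : (1:ℝ) < 2)
      have h2n : (0:ℝ) < 2 ^ n := by positivity
      have hinv : 1 / (2:ℝ) ^ n < ε := by
        rw [div_lt_iff₀ h2n]
        rw [← inv_lt_iff_one_lt_mul₀'] at *
        · calc ε⁻¹ < 2 ^ n := hn
            _ = _ := rfl
        · exact hε
      set k : ℕ := ⌊t * 2 ^ n⌋₊ with hk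
      have ht01 : 0 ≤ t ∧ t ≤ 1 := ⟨ht, by linarith⟩
      have hkle : k ≤ 2 ^ n := by
        have : t * 2 ^ n ≤ (2:ℝ) ^ n := by nlinarith [ht01.2]
        calc k = ⌊t * 2 ^ n⌋₊ := rfl
          _ ≤ ⌊(2:ℝ) ^ n⌋₊ := Nat.floor_mono this
          _ = 2 ^ n := by
              rw [show ((2:ℝ) ^ n) = ((2 ^ n : ℕ) : ℝ) by push_cast; ring, Nat.floor_natCast]
      refine ⟨(k : ℝ) / 2 ^ n, hdy n k hkle, ?_⟩
      have hfl : (k : ℝ) ≤ t * 2 ^ n := Nat.floor_le (by positivity)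
      have hfl2 : t * 2 ^ n < k + 1 := Nat.lt_floor_add_one _
      rw [Real.dist_eq, abs_of_nonneg]
      · rw [sub_lt_iff_lt_add]
        calc t = t * 2 ^ n / 2 ^ n := by field_simp
          _ < ((k : ℝ) + 1) / 2 ^ n := by gcongr
          _ ≤ ε + k / 2 ^ n := by
              rw [add_div]
              have : 1 / (2:ℝ) ^ n ≤ ε := hinv.le
              linarith
      · rw [sub_nonneg, div_le_iff₀ h2n]
        exact hfl
    rwa [hDcl.closure_eq] at htcl
  have hfin : a + t • (b - a) ∈ S := htD.2
  have : s • a + t • b = a + t • (b - a) := by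
    have hs1 : s = 1 - t := by linarith
    rw [hs1]; module
  rw [this]
  exact hfin

/-- domination by m_μ characterizes subsolutions. -/
theorem statement_11
    (d : ℕ) (hd : 0 < d)
    (H : Ed d → Ed d → ℝ)
    (hHcont : Continuous fun q : Ed d × Ed d => H q.1 q.2)
    (hreg_bdd : ∀ R : ℝ, 0 < R → ∃ M : ℝ, ∀ p y : Ed d, ‖p‖ ≤ R → |H p y| ≤ M)
    (hreg_uc : ∀ R : ℝ, 0 < R → ∀ ε : ℝ, 0 < ε → ∃ δ : ℝ, 0 < δ ∧ ∀ p p' y y' : Ed d,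
      ‖p‖ ≤ R → ‖p'‖ ≤ R → ‖p - p'‖ < δ → ‖y - y'‖ < δ → |H p y - H p' y'| < ε)
    (hcoer : ∀ M : ℝ, ∃ R : ℝ, ∀ p y : Ed d, R ≤ ‖p‖ → M ≤ H p y)
    (hqc : ∀ p q y : Ed d, H ((1/2 : ℝ) • (p + q)) y ≤ max (H p y) (H q y))
    (Λ : ℝ → ℝ → ℝ)
    (hΛcont : Continuous fun m : ℝ × ℝ => Λ m.1 m.2)
    (hΛmono : ∀ a b a' b' : ℝ, a ≤ a' → b ≤ b' → Λ a b ≤ Λ a' b')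
    (hΛstrict : ∀ a b : ℝ, a ≠ b → Λ a b < max a b)
    (hsqc : ∀ p q y : Ed d, H ((1/2 : ℝ) • (p + q)) y ≤ Λ (H p y) (H q y))
    (μ : ℝ) (hμ : Hstar d H < μ) (w : Ed d → ℝ) (hw : w ∈ LipFuns d) :
    (∀ x y : Ed d, w y - w x ≤ mMu d H μ y x) ↔
      (∀ᵐ y ∂volume, H (gradient w y) y ≤ μ) := by
  -- A uniform bound on gradients of subsolutions, from coercivity.
  obtain ⟨R₀, hR₀⟩ := hcoer (μ + 1)
  set R : ℝ := max R₀ 1 with hRdef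
  have hR1 : (1:ℝ) ≤ R := le_max_right _ _
  have hRpos : (0:ℝ) < R := lt_of_lt_of_le one_pos hR1
  have hRle : ∀ p y : Ed d, H p y ≤ μ → ‖p‖ ≤ R := by
    intro p y hp
    by_contra hcon
    push_neg at hcon
    have : μ + 1 ≤ H p y := hR₀ p y (le_trans (le_max_left _ _) hcon.le)
    linarith
  -- Existence of one subsolution, from Hstar < μ.
  have hex : ∃ u, u ∈ LipFuns d ∧ (∀ᵐ z ∂(volume : Measure (Ed d)), H (gradient u z) z ≤ μ) := by
    set T : Set ℝ := {t | ∃ w' ∈ LipFuns d, t = essSup (fun y => H (gradient w' y) y) volume}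
      with hT
    have hTne : T.Nonempty := by
      refine ⟨essSup (fun y => H (gradient (fun _ : Ed d => (0:ℝ)) y) y) volume,
        (fun _ : Ed d => (0:ℝ)), ⟨0, LipschitzWith.const 0⟩, rfl⟩
    have hlt : ∃ t ∈ T, t < μ := by
      by_cases hbb : BddBelow T
      · exact (csInf_lt_iff hbb hTne).1 hμ
      · obtain ⟨t, htT, htlt⟩ := not_bddBelow_iff.1 hbb μ
        exact ⟨t, htT, htlt⟩
    obtain ⟨t, ⟨u, hu, htu⟩, htlt⟩ := hlt
    refine ⟨u, hu, ?_⟩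
    obtain ⟨Cu, hCu⟩ := hu
    obtain ⟨M, hM⟩ := hreg_bdd ((Cu:ℝ) + 1) (by positivity)
    have hbdd : Filter.IsBoundedUnder (· ≤ ·) (ae (volume : Measure (Ed d)))
        (fun y => H (gradient u y) y) := by
      apply Filter.isBoundedUnder_of
      refine ⟨M, fun z => ?_⟩
      have h1 : ‖gradient u z‖ ≤ (Cu:ℝ) + 1 :=
        le_trans (norm_gradient_le hCu z) (by linarith)
      exact (abs_le.1 (hM _ _ h1)).2
    have := ae_lt_of_essSup_lt (htu ▸ htlt) hbdd
    filter_upwards [this] with z hz using hz.le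
  constructor
  · -- forward direction
    intro Hyp
    obtain ⟨Cw, hCw⟩ := hw
    filter_upwards [hCw.ae_differentiableAt] with z₀ hdiff
    set p : Ed d := gradient w z₀ with hp
    show H p z₀ ≤ μ
    have hmain : ∀ ε : ℝ, 0 < ε → H p z₀ ≤ μ + ε := by
      intro ε hε
      obtain ⟨δ', hδ'pos, hδ'⟩ := hreg_uc R hRpos ε hε
      set K : Set (Ed d) := {q | ‖q‖ ≤ R ∧ H q z₀ ≤ μ + ε} with hK
      have hHc1 : Continuous fun q : Ed d => H q z₀ :=
        hHcont.comp (continuous_id.prodMk continuous_const)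
      have hKcl : IsClosed K :=
        (isClosed_le continuous_norm continuous_const).inter
          (isClosed_le hHc1 continuous_const)
      have hKconv : Convex ℝ K := by
        apply midClosedConvex hKcl
        rintro q ⟨hq1, hq2⟩ q' ⟨hq1', hq2'⟩
        have hns : ‖(1/2 : ℝ) • (q + q')‖ = (1/2) * ‖q + q'‖ := by
          rw [norm_smul]; norm_num
        constructor
        · rw [hns]
          have := norm_add_le q q'
          linarith
        · exact le_trans (hqc q q' z₀) (max_le hq2 hq2')
      -- subsolutions have gradients in K near z₀
      have hadm : ∀ u : Ed d → ℝ, u ∈ LipFuns d →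
          (∀ᵐ z ∂(volume : Measure (Ed d)), H (gradient u z) z ≤ μ) →
          ∀ᵐ z ∂(volume : Measure (Ed d)), z ∈ Metric.ball z₀ δ' →
            DifferentiableAt ℝ u z ∧ gradient u z ∈ K := by
        rintro u ⟨Cu, hCu⟩ haeu
        filter_upwards [hCu.ae_differentiableAt, haeu] with z h1 h2 hball
        have hn : ‖gradient u z‖ ≤ R := hRle _ _ h2
        refine ⟨h1, hn, ?_⟩
        have hdist : ‖z - z₀‖ < δ' := by
          rw [← dist_eq_norm]; exact hball
        have := hδ' (gradient u z) (gradient u z) z z₀ hn hn (by simpa using hδ'pos) hdist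
        have h3 : H (gradient u z) z₀ < H (gradient u z) z + ε := by
          have := abs_lt.1 this
          linarith [this.1]
        linarith
      obtain ⟨u', hu'lip, hu'ae⟩ := hex
      -- K nonempty
      have hKne : K.Nonempty := by
        have haeu' := hadm u' hu'lip hu'ae
        have hballpos : 0 < (volume : Measure (Ed d)) (Metric.ball z₀ δ') :=
          Metric.isOpen_ball.measure_pos _ ⟨z₀, Metric.mem_ball_self hδ'pos⟩
        have hnull : (volume : Measure (Ed d)) {z | ¬ (z ∈ Metric.ball z₀ δ' →
            DifferentiableAt ℝ u' z ∧ gradient u' z ∈ K)} = 0 := by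
          rw [← ae_iff]; exact haeu'
        have hne0 : (volume : Measure (Ed d)) (Metric.ball z₀ δ' ∩
            {z | z ∈ Metric.ball z₀ δ' → DifferentiableAt ℝ u' z ∧ gradient u' z ∈ K}) ≠ 0 := by
          intro hzero
          have : (volume : Measure (Ed d)) (Metric.ball z₀ δ') = 0 := by
            rw [← le_zero_iff]
            have hsub : Metric.ball z₀ δ' ⊆
                (Metric.ball z₀ δ' ∩ {z | z ∈ Metric.ball z₀ δ' →
                  DifferentiableAt ℝ u' z ∧ gradient u' z ∈ K}) ∪
                {z | ¬ (z ∈ Metric.ball z₀ δ' →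
                  DifferentiableAt ℝ u' z ∧ gradient u' z ∈ K)} := by
              intro z hz
              by_cases hzq : z ∈ Metric.ball z₀ δ' →
                  DifferentiableAt ℝ u' z ∧ gradient u' z ∈ K
              · exact Or.inl ⟨hz, hzq⟩
              · exact Or.inr hzq
            calc (volume : Measure (Ed d)) (Metric.ball z₀ δ') ≤ _ := measure_mono hsub
              _ ≤ _ + _ := measure_union_le _ _
              _ = 0 := by rw [hzero, hnull, add_zero]
          exact absurd this (ne_of_gt hballpos)
        obtain ⟨z, hz1, hz2⟩ := nonempty_of_measure_ne_zero hne0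
        exact ⟨gradient u' z, (hz2 hz1).2⟩
      -- show p ∈ K by separation
      have hpK : p ∈ K := by
        by_contra hpK
        obtain ⟨f, u₀, hfK, hfp⟩ := geometric_hahn_banach_closed_point hKconv hKcl hpK
        set v : Ed d := (InnerProductSpace.toDual ℝ (Ed d)).symm f with hv
        have hfv : ∀ q : Ed d, f q = ⟪v, q⟫ := fun q =>
          (InnerProductSpace.toDual_symm_apply).symm
        set t₀ : ℝ := δ' / (4 * (‖v‖ + 1)) with ht₀def
        have ht₀ : 0 < t₀ := by positivity
        have hclaim : ∀ t : ℝ, t ∈ Set.Ioo 0 t₀ →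
            (w (z₀ + t • v) - w z₀) / t ≤ u₀ := by
          intro t ht
          have htpos : 0 < t := ht.1
          have h1 : w (z₀ + t • v) - w z₀ ≤ mMu d H μ (z₀ + t • v) z₀ := Hyp z₀ (z₀ + t • v)
          have h2 : mMu d H μ (z₀ + t • v) z₀ ≤ t * u₀ := by
            apply csSup_le
            · exact ⟨u' (z₀ + t • v) - u' z₀, u', hu'lip, hu'ae, rfl⟩
            · rintro r ⟨u, hul, huae, rfl⟩
              obtain ⟨Cu, hCu⟩ := hul
              apply segEst hCu z₀ δ' (t * u₀) z₀ (z₀ + t • v)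
              · simpa using (by positivity : (0:ℝ) < δ' / 2)
              · have : dist (z₀ + t • v) z₀ = t * ‖v‖ := by
                  rw [dist_eq_norm]
                  have : z₀ + t • v - z₀ = t • v := by module
                  rw [this, norm_smul, Real.norm_eq_abs, abs_of_pos htpos]
                rw [this]
                have hb : t * ‖v‖ ≤ t * (‖v‖ + 1) := by nlinarith [norm_nonneg v]
                have : t * (‖v‖ + 1) < t₀ * (‖v‖ + 1) := by
                  have := ht.2; nlinarith [norm_nonneg v]
                have ht₀v : t₀ * (‖v‖ + 1) = δ' / 4 := by
                  rw [ht₀def]; field_simp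
                linarith
              · filter_upwards [hadm u ⟨Cu, hCu⟩ huae] with z hz hball
                obtain ⟨hdiffz, hKz⟩ := hz hball
                refine ⟨hdiffz, ?_⟩
                have hyx : z₀ + t • v - z₀ = t • v := by module
                rw [hyx, real_inner_smul_right]
                have hfq : ⟪gradient u z, v⟫ < u₀ := by
                  have := hfK _ hKz
                  rw [hfv] at this
                  rwa [real_inner_comm]
                nlinarith
          rw [div_le_iff₀ htpos]
          linarith [mul_comm t u₀ ▸ h2]
        -- derivative of t ↦ w (z₀ + t • v) at 0
        have haffd : HasDerivAt (fun t : ℝ => z₀ + t • v) v 0 := by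
          have h' : HasDerivAt (fun t : ℝ => t • v) ((1:ℝ) • v) 0 :=
            (hasDerivAt_id 0).smul_const v
          rw [one_smul] at h'
          exact h'.const_add z₀
        have hder : HasDerivAt (fun t : ℝ => w (z₀ + t • v)) (fderiv ℝ w z₀ v) 0 := by
          have hz00 : z₀ + (0:ℝ) • v = z₀ := by module
          have hdf : HasFDerivAt w (fderiv ℝ w z₀) (z₀ + (0:ℝ) • v) := by
            rw [hz00]; exact hdiff.hasFDerivAt
          exact hdf.comp_hasDerivAt 0 haffd
        have hslope := hasDerivAt_iff_tendsto_slope.1 hder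
        have hright : Tendsto (fun t : ℝ => (w (z₀ + t • v) - w z₀) / t) (nhdsWithin 0 (Set.Ioi 0))
            (nhds (fderiv ℝ w z₀ v)) := by
          have hmono : nhdsWithin (0:ℝ) (Set.Ioi 0) ≤ nhdsWithin 0 {(0:ℝ)}ᶜ :=
            nhdsWithin_mono 0 (fun t ht => ne_of_gt ht)
          have := hslope.mono_left hmono
          apply Tendsto.congr' _ this
          filter_upwards [self_mem_nhdsWithin] with t ht
          have hz00 : z₀ + (0:ℝ) • v = z₀ := by module
          simp [slope, hz00, div_eq_inv_mul]
        have hle : fderiv ℝ w z₀ v ≤ u₀ := by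
          apply le_of_tendsto hright
          filter_upwards [Ioo_mem_nhdsGT ht₀] with t ht
          exact hclaim t ht
        have hcontra : f p ≤ u₀ := by
          rw [hfv, real_inner_comm, hp, inner_gradient_eq]
          exact hle
        linarith
      exact hpK.2
    by_contra hcon
    push_neg at hcon
    have := hmain ((H p z₀ - μ)/2) (by linarith)
    linarith
  · -- backward direction
    intro haeW x y
    apply le_csSup
    · refine ⟨R * ‖y - x‖, ?_⟩
      rintro r ⟨u, ⟨Cu, hCu⟩, huae, rfl⟩
      apply segEst hCu x (2 * dist x y + 2) (R * ‖y - x‖) x y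
      · have : (0:ℝ) < (2 * dist x y + 2) / 2 := by positivity
        simpa using this
      · rw [dist_comm y x]
        have : (2 * dist x y + 2) / 2 = dist x y + 1 := by ring
        rw [this]; linarith
      · filter_upwards [hCu.ae_differentiableAt, huae] with z h1 h2 _
        refine ⟨h1, ?_⟩
        calc ⟪gradient u z, y - x⟫ ≤ ‖gradient u z‖ * ‖y - x‖ := real_inner_le_norm _ _
          _ ≤ R * ‖y - x‖ :=
            mul_le_mul_of_nonneg_right (hRle _ _ h2) (norm_nonneg _)
    · exact ⟨w, hw, haeW, rfl⟩
end
end
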